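/- Let R be a unital associative algebra over a field F, let q ∈ F, q ∉ {0,1}, and let A, B ∈ R satisfy A·B − q·B·A = 1. Write C = A·B − B·A. Suppose q^p = 1 and {p}_q = 0 for some positive integer p, and let k be a natural number with p dividing k+1 (so C^{k+1} is central). Then [C^k·A, B·C] = C^{k+2}. -/

import Mathlib

theorem comm_CkA_BC {F : Type*} [Field F] {R : Type*} [Ring R] [Algebra F R]
    (q : F) (hq0 : q ≠ 0) (hq1 : q ≠ 1) (A B : R) (h : A * B - q • (B * A) = 1)
    (p : ℕ) (hp : 0 < p) (hqp : q ^ p = 1)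
    (hsum : (∑ i ∈ Finset.range p, q ^ i) = 0)
    (k : ℕ) (hk : p ∣ (k + 1)) :
    ((A * B - B * A) ^ k * A) * (B * (A * B - B * A))
        - (B * (A * B - B * A)) * ((A * B - B * A) ^ k * A)
      = (A * B - B * A) ^ (k + 2) := by
  set C : R := A * B - B * A with hCdef
  have hAB : A * B = 1 + q • (B * A) := by linear_combination (norm := noncomm_ring) h
  have hC1 : C = 1 + (q - 1) • (B * A) := by
    rw [hCdef, hAB, sub_smul, one_smul]; abel
  have hCBA : C * (B * A) = (B * A) * C := by
    rw [hC1]; noncomm_ring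
  have hCkBA : C ^ k * (B * A) = (B * A) * C ^ k :=
    ((Commute.pow_left (hCBA : Commute C (B * A)) k)).eq
  have hAC : A * C = q • (C * A) := by
    have key : A * C - q • (C * A) = A * (A * B - q • (B * A)) - (A * B - q • (B * A)) * A := by
      rw [hCdef]; simp only [mul_sub, sub_mul, smul_sub]; noncomm_ring
    rw [h, mul_one, one_mul, sub_self] at key
    exact sub_eq_zero.mp key
  have hACn : ∀ n : ℕ, A * C ^ n = q ^ n • (C ^ n * A) := by
    intro n
    induction n with
    | zero => simp
    | succ m ih =>
      rw [pow_succ, ← mul_assoc, ih, smul_mul_assoc, mul_assoc, hAC, mul_smul_comm, smul_smul,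
        ← pow_succ, ← mul_assoc]
  have hq1k : q ^ (k + 1) = 1 := by
    obtain ⟨m, hm⟩ := hk
    rw [hm, pow_mul, hqp, one_pow]
  have hACk1 : A * C ^ (k + 1) = C ^ (k + 1) * A := by
    rw [hACn (k + 1), hq1k, one_smul]
  -- Now the main computation.
  have e1 : (B * C) * (C ^ k * A) = C ^ k * ((B * A) * C) := by
    calc (B * C) * (C ^ k * A) = B * (C ^ (k + 1) * A) := by
          rw [pow_succ']; noncomm_ring
      _ = B * (A * C ^ (k + 1)) := by rw [hACk1]
      _ = (B * A) * (C ^ k * C) := by rw [pow_succ]; noncomm_ring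
      _ = ((B * A) * C ^ k) * C := (mul_assoc (B * A) (C ^ k) C).symm
      _ = (C ^ k * (B * A)) * C := by rw [hCkBA]
      _ = C ^ k * ((B * A) * C) := by rw [mul_assoc]
  have e2 : (C ^ k * A) * (B * C) = C ^ k * ((A * B) * C) := by noncomm_ring
  rw [e1, e2, ← mul_sub, ← sub_mul]
  rw [← hCdef, pow_succ, pow_succ, mul_assoc]
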